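/- (Proposition 2.2 (iii): kernel of the collision operator.) Let f ∈ L²_M. Then Q f n p = 0 for every n and almost every p ∈ ℝ if and only if there exists a real number N such that for every n, f n p = N * M n p for almost every p ∈ ℝ. -/

import Mathlib

open MeasureTheory Real

private lemma aux_int {α : ℕ → ℕ → ℝ → ℝ → ℝ}
    (hαmeas : ∀ n n', Measurable fun q : ℝ × ℝ => α n n' q.1 q.2)
    {α₂ : ℝ} (hb : ∀ n n' p p', |α n n' p p'| ≤ α₂)
    {u v : ℕ → ℝ → ℝ} (hu : ∀ n, Integrable (u n)) (hv : ∀ n, Integrable (v n))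
    (q : ℕ × ℕ) :
    Integrable (fun z : ℝ × ℝ => α q.1 q.2 z.1 z.2 * (u q.1 z.1 * v q.2 z.2))
      ((volume : Measure ℝ).prod volume) := by
  have h1 : Integrable (fun z : ℝ × ℝ => u q.1 z.1 * v q.2 z.2)
      ((volume : Measure ℝ).prod volume) := (hu q.1).mul_prod (hv q.2)
  exact h1.bdd_mul (hαmeas q.1 q.2).aestronglyMeasurable
    (c := α₂) (ae_of_all _ fun z => by simpa using hb q.1 q.2 z.1 z.2)

private lemma aux_bdd {α : ℕ → ℕ → ℝ → ℝ → ℝ}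
    (hαmeas : ∀ n n', Measurable fun q : ℝ × ℝ => α n n' q.1 q.2)
    {α₂ : ℝ} (hb : ∀ n n' p p', |α n n' p p'| ≤ α₂)
    {u v : ℕ → ℝ → ℝ} (hu : ∀ n, Integrable (u n)) (hv : ∀ n, Integrable (v n))
    (q : ℕ × ℕ) :
    ∫ z : ℝ × ℝ, ‖α q.1 q.2 z.1 z.2 * (u q.1 z.1 * v q.2 z.2)‖
        ∂((volume : Measure ℝ).prod volume)
      ≤ α₂ * ((∫ p, |u q.1 p|) * (∫ p, |v q.2 p|)) := by
  have hint : Integrable (fun z : ℝ × ℝ => |u q.1 z.1| * |v q.2 z.2|)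
      ((volume : Measure ℝ).prod volume) := (hu q.1).abs.mul_prod (hv q.2).abs
  have h2 : ∫ z : ℝ × ℝ, ‖α q.1 q.2 z.1 z.2 * (u q.1 z.1 * v q.2 z.2)‖
        ∂((volume : Measure ℝ).prod volume)
      ≤ ∫ z : ℝ × ℝ, α₂ * (|u q.1 z.1| * |v q.2 z.2|)
        ∂((volume : Measure ℝ).prod volume) := by
    apply integral_mono (aux_int hαmeas hb hu hv q).norm (hint.const_mul α₂)
    intro z
    dsimp only
    have h3 : ‖α q.1 q.2 z.1 z.2 * (u q.1 z.1 * v q.2 z.2)‖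
        = |α q.1 q.2 z.1 z.2| * (|u q.1 z.1| * |v q.2 z.2|) := by
      simp [abs_mul]
    rw [h3]
    apply mul_le_mul_of_nonneg_right (hb ..) (by positivity)
  calc _ ≤ _ := h2
    _ = α₂ * ((∫ p, |u q.1 p|) * (∫ p, |v q.2 p|)) := by
        rw [integral_const_mul,
          integral_prod_mul (fun p : ℝ => |u q.1 p|) (fun p : ℝ => |v q.2 p|)]

private lemma aux_sum {α : ℕ → ℕ → ℝ → ℝ → ℝ}
    (hαmeas : ∀ n n', Measurable fun q : ℝ × ℝ => α n n' q.1 q.2)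
    {α₂ : ℝ} (hb : ∀ n n' p p', |α n n' p p'| ≤ α₂)
    {u v : ℕ → ℝ → ℝ} (hu : ∀ n, Integrable (u n)) (hv : ∀ n, Integrable (v n))
    (hus : Summable fun n => ∫ p, |u n p|) (hvs : Summable fun n => ∫ p, |v n p|) :
    Summable fun q : ℕ × ℕ => ∫ z : ℝ × ℝ, α q.1 q.2 z.1 z.2 * (u q.1 z.1 * v q.2 z.2)
      ∂((volume : Measure ℝ).prod volume) := by
  apply Summable.of_norm_bounded
    (g := fun q : ℕ × ℕ => α₂ * ((∫ p, |u q.1 p|) * (∫ p, |v q.2 p|)))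
    (((hus.mul_of_nonneg hvs (fun n => integral_nonneg fun p => abs_nonneg _)
        (fun n => integral_nonneg fun p => abs_nonneg _)).mul_left α₂))
  intro q
  exact (norm_integral_le_integral_norm _).trans (aux_bdd hαmeas hb hu hv q)

private lemma aux_swap {α : ℕ → ℕ → ℝ → ℝ → ℝ}
    (hsym : ∀ n n' p p', α n n' p p' = α n' n p' p)
    (u v : ℕ → ℝ → ℝ) :
    (∑' q : ℕ × ℕ, ∫ z : ℝ × ℝ, α q.1 q.2 z.1 z.2 * (u q.1 z.1 * v q.2 z.2)
        ∂((volume : Measure ℝ).prod volume))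
    = ∑' q : ℕ × ℕ, ∫ z : ℝ × ℝ, α q.1 q.2 z.1 z.2 * (v q.1 z.1 * u q.2 z.2)
        ∂((volume : Measure ℝ).prod volume) := by
  rw [← (Equiv.prodComm ℕ ℕ).tsum_eq
    (fun q : ℕ × ℕ => ∫ z : ℝ × ℝ, α q.1 q.2 z.1 z.2 * (v q.1 z.1 * u q.2 z.2)
        ∂((volume : Measure ℝ).prod volume))]
  apply tsum_congr
  intro q
  rw [← integral_prod_swap]
  apply integral_congr_ae
  filter_upwards with z
  simp only [Prod.swap, Equiv.prodComm_apply, Prod.fst_swap, Prod.snd_swap]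
  rw [hsym]
  ring

private lemma aux_forward
    (M : ℕ → ℝ → ℝ) (hMpos : ∀ n p, 0 < M n p)
    (hMint : ∀ n, Integrable (M n))
    (hMabs : Summable fun n => ∫ p, |M n p|)
    (α : ℕ → ℕ → ℝ → ℝ → ℝ)
    (hαmeas : ∀ n n', Measurable fun q : ℝ × ℝ => α n n' q.1 q.2)
    (α₁ α₂ : ℝ) (hα₁ : 0 < α₁)
    (hsym : ∀ n n' p p', α n n' p p' = α n' n p' p)
    (hbd : ∀ n n' p p', α₁ ≤ α n n' p p' ∧ α n n' p p' ≤ α₂)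
    (f g : ℕ → ℝ → ℝ)
    (hg : ∀ n p, g n p = f n p ^ 2 / M n p)
    (hfint : ∀ n, Integrable (f n))
    (hfabs : Summable fun n => ∫ p, |f n p|)
    (hgint : ∀ n, Integrable (g n))
    (hgabs : Summable fun n => ∫ p, |g n p|)
    (hQ0 : ∀ n, ∀ᵐ p ∂(volume : Measure ℝ),
      (∑' n', ∫ p', α n n' p p' * (M n p * f n' p' - M n' p' * f n p)) = 0) :
    ∃ N : ℝ, ∀ n, ∀ᵐ p ∂(volume : Measure ℝ), f n p = N * M n p := by
  have hαabs : ∀ n n' p p', |α n n' p p'| ≤ α₂ := fun n n' p p' =>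
    (abs_le.2 ⟨by nlinarith [(hbd n n' p p').1, (hbd n n' p p').2],
      (hbd n n' p p').2⟩)
  have hαpos : ∀ n n' p p', 0 < α n n' p p' := fun n n' p p' =>
    lt_of_lt_of_le hα₁ (hbd n n' p p').1
  -- the key families
  set W : ℕ × ℕ → ℝ × ℝ → ℝ := fun q z =>
    α q.1 q.2 z.1 z.2 * (f q.1 z.1 * f q.2 z.2 - g q.1 z.1 * M q.2 z.2) with hWdef
  have hWint : ∀ q, Integrable (W q) ((volume : Measure ℝ).prod volume) := by
    intro q
    apply ((aux_int hαmeas hαabs hfint hfint q).sub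
      (aux_int hαmeas hαabs hgint hMint q)).congr
    filter_upwards with z
    simp only [hWdef, Pi.sub_apply]
    ring
  have hWval : ∀ q, ∫ z : ℝ × ℝ, W q z ∂((volume : Measure ℝ).prod volume)
      = (∫ z : ℝ × ℝ, α q.1 q.2 z.1 z.2 * (f q.1 z.1 * f q.2 z.2)
          ∂((volume : Measure ℝ).prod volume))
        - ∫ z : ℝ × ℝ, α q.1 q.2 z.1 z.2 * (g q.1 z.1 * M q.2 z.2)
          ∂((volume : Measure ℝ).prod volume) := by
    intro q
    rw [← integral_sub (aux_int hαmeas hαabs hfint hfint q)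
      (aux_int hαmeas hαabs hgint hMint q)]
    apply integral_congr_ae
    filter_upwards with z
    simp only [hWdef]
    ring
  have hAsum := aux_sum hαmeas hαabs hfint hfint hfabs hfabs
  have hBsum := aux_sum hαmeas hαabs hgint hMint hgabs hMabs
  have hCsum := aux_sum hαmeas hαabs hMint hgint hMabs hgabs
  have hWsum : Summable fun q : ℕ × ℕ =>
      ∫ z : ℝ × ℝ, W q z ∂((volume : Measure ℝ).prod volume) :=
    (hAsum.sub hBsum).congr fun q => (hWval q).symm
  have hWnormbdd : ∀ q : ℕ × ℕ,
      ∫ z : ℝ × ℝ, ‖W q z‖ ∂((volume : Measure ℝ).prod volume)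
        ≤ α₂ * ((∫ p, |f q.1 p|) * (∫ p, |f q.2 p|))
          + α₂ * ((∫ p, |g q.1 p|) * (∫ p, |M q.2 p|)) := by
    intro q
    have h1 : ∫ z : ℝ × ℝ, ‖W q z‖ ∂((volume : Measure ℝ).prod volume)
        ≤ ∫ z : ℝ × ℝ, (‖α q.1 q.2 z.1 z.2 * (f q.1 z.1 * f q.2 z.2)‖
            + ‖α q.1 q.2 z.1 z.2 * (g q.1 z.1 * M q.2 z.2)‖)
          ∂((volume : Measure ℝ).prod volume) := by
      apply integral_mono (hWint q).norm
        ((aux_int hαmeas hαabs hfint hfint q).norm.add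
          (aux_int hαmeas hαabs hgint hMint q).norm)
      intro z
      simp only [hWdef]
      calc ‖α q.1 q.2 z.1 z.2 * (f q.1 z.1 * f q.2 z.2 - g q.1 z.1 * M q.2 z.2)‖
          = ‖α q.1 q.2 z.1 z.2 * (f q.1 z.1 * f q.2 z.2)
              - α q.1 q.2 z.1 z.2 * (g q.1 z.1 * M q.2 z.2)‖ := by ring_nf
        _ ≤ _ := norm_sub_le _ _
    calc _ ≤ _ := h1
      _ = (∫ z : ℝ × ℝ, ‖α q.1 q.2 z.1 z.2 * (f q.1 z.1 * f q.2 z.2)‖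
            ∂((volume : Measure ℝ).prod volume))
          + ∫ z : ℝ × ℝ, ‖α q.1 q.2 z.1 z.2 * (g q.1 z.1 * M q.2 z.2)‖
            ∂((volume : Measure ℝ).prod volume) :=
        integral_add (aux_int hαmeas hαabs hfint hfint q).norm
          (aux_int hαmeas hαabs hgint hMint q).norm
      _ ≤ _ := add_le_add (aux_bdd hαmeas hαabs hfint hfint q)
          (aux_bdd hαmeas hαabs hgint hMint q)
  -- Step 1: for each n, the sum over n' of the double integrals of W (n, n') vanishes
  have En : ∀ n, (∑' n', ∫ z : ℝ × ℝ, W (n, n') z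
      ∂((volume : Measure ℝ).prod volume)) = 0 := by
    intro n
    have hψint : ∀ n', Integrable (fun p => ∫ p', W (n, n') (p, p')) volume :=
      fun n' => (hWint (n, n')).integral_prod_left
    have hψsum : Summable fun n' => ∫ p, ‖∫ p', W (n, n') (p, p')‖ := by
      apply Summable.of_nonneg_of_le
        (fun n' => integral_nonneg fun p => norm_nonneg _)
        (fun n' => ?_)
        ((((hfabs.mul_left (∫ p, |f n p|)).mul_left α₂).add
          ((hMabs.mul_left (∫ p, |g n p|)).mul_left α₂)))
      calc ∫ p, ‖∫ p', W (n, n') (p, p')‖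
          ≤ ∫ p, ∫ p', ‖W (n, n') (p, p')‖ := by
            apply integral_mono (hψint n').norm
              ((hWint (n, n')).norm.integral_prod_left)
            intro p
            exact norm_integral_le_integral_norm _
        _ = ∫ z : ℝ × ℝ, ‖W (n, n') z‖ ∂((volume : Measure ℝ).prod volume) :=
            (integral_prod _ (hWint (n, n')).norm).symm
        _ ≤ _ := hWnormbdd (n, n')
    have h0 : ∫ p, (∑' n', ∫ p', α n n' p p' * (M n p * f n' p' - M n' p' * f n p))
        * (f n p / M n p) = 0 := by
      have he : (fun p => (∑' n', ∫ p', α n n' p p' * (M n p * f n' p' - M n' p' * f n p))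
          * (f n p / M n p)) =ᵐ[volume] (fun _ => (0 : ℝ)) := by
        filter_upwards [hQ0 n] with p hp
        rw [hp, zero_mul]
      rw [integral_congr_ae he, integral_zero]
    have h1 : ∫ p, (∑' n', ∫ p', α n n' p p' * (M n p * f n' p' - M n' p' * f n p))
        * (f n p / M n p) = ∫ p, ∑' n', ∫ p', W (n, n') (p, p') := by
      apply integral_congr_ae
      filter_upwards with p
      rw [← tsum_mul_right]
      apply tsum_congr
      intro n'
      rw [← integral_mul_const]
      apply integral_congr_ae
      filter_upwards with p'
      simp only [hWdef]
      have hMn := (hMpos n p).ne'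
      rw [hg]
      field_simp
    have h2 : ∫ p, ∑' n', ∫ p', W (n, n') (p, p')
        = ∑' n', ∫ p, ∫ p', W (n, n') (p, p') :=
      (integral_tsum_of_summable_integral_norm hψint hψsum).symm
    calc (∑' n', ∫ z : ℝ × ℝ, W (n, n') z ∂((volume : Measure ℝ).prod volume))
        = ∑' n', ∫ p, ∫ p', W (n, n') (p, p') :=
          tsum_congr fun n' => integral_prod _ (hWint (n, n'))
      _ = ∫ p, ∑' n', ∫ p', W (n, n') (p, p') := h2.symm
      _ = ∫ p, (∑' n', ∫ p', α n n' p p' * (M n p * f n' p' - M n' p' * f n p))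
          * (f n p / M n p) := h1.symm
      _ = 0 := h0
  -- Step 2: the total sum over pairs vanishes
  have htot : (∑' q : ℕ × ℕ, ∫ z : ℝ × ℝ, W q z
      ∂((volume : Measure ℝ).prod volume)) = 0 := by
    rw [Summable.tsum_prod' hWsum fun n => hWsum.prod_factor n]
    calc (∑' n, ∑' n', ∫ z : ℝ × ℝ, W (n, n') z ∂((volume : Measure ℝ).prod volume))
        = ∑' (_ : ℕ), (0 : ℝ) := tsum_congr En
      _ = 0 := tsum_zero
  -- Step 3: I(f,f) = I(g,M)
  have hIAB : (∑' q : ℕ × ℕ, ∫ z : ℝ × ℝ, α q.1 q.2 z.1 z.2 * (f q.1 z.1 * f q.2 z.2)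
        ∂((volume : Measure ℝ).prod volume))
      = ∑' q : ℕ × ℕ, ∫ z : ℝ × ℝ, α q.1 q.2 z.1 z.2 * (g q.1 z.1 * M q.2 z.2)
        ∂((volume : Measure ℝ).prod volume) := by
    have := htot
    rw [tsum_congr hWval, Summable.tsum_sub hAsum hBsum] at this
    linarith
  -- Step 4: the quadratic form vanishes, hence the ratios agree a.e.
  have hGint : ∀ q : ℕ × ℕ, Integrable (fun z : ℝ × ℝ =>
      α q.1 q.2 z.1 z.2 * (M q.1 z.1 * M q.2 z.2 *
        (f q.2 z.2 / M q.2 z.2 - f q.1 z.1 / M q.1 z.1) ^ 2))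
      ((volume : Measure ℝ).prod volume) := by
    intro q
    apply (((aux_int hαmeas hαabs hgint hMint q).add
      (aux_int hαmeas hαabs hMint hgint q)).sub
      ((aux_int hαmeas hαabs hfint hfint q).const_mul 2)).congr
    filter_upwards with z
    simp only [Pi.sub_apply, Pi.add_apply]
    rw [hg, hg]
    have h1 := (hMpos q.1 z.1).ne'
    have h2 := (hMpos q.2 z.2).ne'
    field_simp
    ring
  have hGval : ∀ q : ℕ × ℕ, ∫ z : ℝ × ℝ,
      α q.1 q.2 z.1 z.2 * (M q.1 z.1 * M q.2 z.2 *
        (f q.2 z.2 / M q.2 z.2 - f q.1 z.1 / M q.1 z.1) ^ 2)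
        ∂((volume : Measure ℝ).prod volume)
      = ((∫ z : ℝ × ℝ, α q.1 q.2 z.1 z.2 * (g q.1 z.1 * M q.2 z.2)
            ∂((volume : Measure ℝ).prod volume))
          + ∫ z : ℝ × ℝ, α q.1 q.2 z.1 z.2 * (M q.1 z.1 * g q.2 z.2)
            ∂((volume : Measure ℝ).prod volume))
        - 2 * ∫ z : ℝ × ℝ, α q.1 q.2 z.1 z.2 * (f q.1 z.1 * f q.2 z.2)
            ∂((volume : Measure ℝ).prod volume) := by
    intro q
    have intB := aux_int hαmeas hαabs hgint hMint q
    have intC := aux_int hαmeas hαabs hMint hgint q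
    have intA := aux_int hαmeas hαabs hfint hfint q
    have intBC : Integrable (fun z : ℝ × ℝ =>
        α q.1 q.2 z.1 z.2 * (g q.1 z.1 * M q.2 z.2)
          + α q.1 q.2 z.1 z.2 * (M q.1 z.1 * g q.2 z.2))
        ((volume : Measure ℝ).prod volume) := intB.add intC
    have intA2 : Integrable (fun z : ℝ × ℝ =>
        2 * (α q.1 q.2 z.1 z.2 * (f q.1 z.1 * f q.2 z.2)))
        ((volume : Measure ℝ).prod volume) := intA.const_mul 2
    have e1 : ∫ z : ℝ × ℝ,
        α q.1 q.2 z.1 z.2 * (M q.1 z.1 * M q.2 z.2 *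
          (f q.2 z.2 / M q.2 z.2 - f q.1 z.1 / M q.1 z.1) ^ 2)
          ∂((volume : Measure ℝ).prod volume)
        = ∫ z : ℝ × ℝ, ((α q.1 q.2 z.1 z.2 * (g q.1 z.1 * M q.2 z.2)
            + α q.1 q.2 z.1 z.2 * (M q.1 z.1 * g q.2 z.2))
          - 2 * (α q.1 q.2 z.1 z.2 * (f q.1 z.1 * f q.2 z.2)))
          ∂((volume : Measure ℝ).prod volume) := by
      apply integral_congr_ae
      filter_upwards with z
      rw [hg, hg]
      have h1 := (hMpos q.1 z.1).ne'
      have h2 := (hMpos q.2 z.2).ne'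
      field_simp
      ring
    rw [e1, integral_sub intBC intA2, integral_add intB intC, integral_const_mul]
  have hGsum : Summable fun q : ℕ × ℕ => ∫ z : ℝ × ℝ,
      α q.1 q.2 z.1 z.2 * (M q.1 z.1 * M q.2 z.2 *
        (f q.2 z.2 / M q.2 z.2 - f q.1 z.1 / M q.1 z.1) ^ 2)
        ∂((volume : Measure ℝ).prod volume) :=
    ((hBsum.add hCsum).sub (hAsum.mul_left 2)).congr fun q => (hGval q).symm
  have htotG : (∑' q : ℕ × ℕ, ∫ z : ℝ × ℝ,
      α q.1 q.2 z.1 z.2 * (M q.1 z.1 * M q.2 z.2 *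
        (f q.2 z.2 / M q.2 z.2 - f q.1 z.1 / M q.1 z.1) ^ 2)
        ∂((volume : Measure ℝ).prod volume)) = 0 := by
    rw [tsum_congr hGval, Summable.tsum_sub (hBsum.add hCsum) (hAsum.mul_left 2),
      Summable.tsum_add hBsum hCsum, tsum_mul_left]
    have hswap := aux_swap hsym M g
    rw [hswap, ← hIAB]
    ring
  -- Step 5: each term of the nonnegative quadratic form vanishes
  have hGnn : ∀ (q : ℕ × ℕ) (z : ℝ × ℝ), 0 ≤ α q.1 q.2 z.1 z.2 *
      (M q.1 z.1 * M q.2 z.2 * (f q.2 z.2 / M q.2 z.2 - f q.1 z.1 / M q.1 z.1) ^ 2) :=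
    fun q z => mul_nonneg (hαpos q.1 q.2 z.1 z.2).le
      (mul_nonneg (mul_nonneg (hMpos q.1 z.1).le (hMpos q.2 z.2).le) (sq_nonneg _))
  have hGzero : ∀ q : ℕ × ℕ, ∫ z : ℝ × ℝ,
      α q.1 q.2 z.1 z.2 * (M q.1 z.1 * M q.2 z.2 *
        (f q.2 z.2 / M q.2 z.2 - f q.1 z.1 / M q.1 z.1) ^ 2)
        ∂((volume : Measure ℝ).prod volume) = 0 := by
    intro q
    have hle := Summable.le_tsum hGsum q fun j _ => integral_nonneg fun z => hGnn j z
    rw [htotG] at hle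
    exact le_antisymm hle (integral_nonneg fun z => hGnn q z)
  have hae : ∀ q : ℕ × ℕ, ∀ᵐ z ∂((volume : Measure ℝ).prod volume),
      f q.2 z.2 / M q.2 z.2 = f q.1 z.1 / M q.1 z.1 := by
    intro q
    have h0 := (integral_eq_zero_iff_of_nonneg (fun z => hGnn q z) (hGint q)).1 (hGzero q)
    filter_upwards [h0] with z hz
    simp only [Pi.zero_apply] at hz
    have hα := (hαpos q.1 q.2 z.1 z.2).ne'
    have h1 := (hMpos q.1 z.1).ne'
    have h2 := (hMpos q.2 z.2).ne'
    have h3 : M q.1 z.1 * M q.2 z.2 *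
        (f q.2 z.2 / M q.2 z.2 - f q.1 z.1 / M q.1 z.1) ^ 2 = 0 :=
      (mul_eq_zero.1 hz).resolve_left hα
    have h4 : (f q.2 z.2 / M q.2 z.2 - f q.1 z.1 / M q.1 z.1) ^ 2 = 0 :=
      (mul_eq_zero.1 h3).resolve_left (mul_ne_zero h1 h2)
    have h5 := pow_eq_zero_iff (two_ne_zero (α := ℕ)) |>.1 h4
    exact sub_eq_zero.1 h5
  -- Step 6: extract the constant
  haveI hne : (MeasureTheory.ae (volume : Measure ℝ)).NeBot := by
    rw [ae_neBot]
    intro h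
    have := congrArg (fun μ : Measure ℝ => μ (Set.Ioo (0 : ℝ) 1)) h
    simp [Real.volume_Ioo] at this
  have hpairs : ∀ a b : ℕ, ∀ᵐ x ∂(volume : Measure ℝ), ∀ᵐ y ∂(volume : Measure ℝ),
      f b y / M b y = f a x / M a x := fun a b => Measure.ae_ae_of_ae_prod (hae (a, b))
  obtain ⟨x₀, hx₀⟩ := (hpairs 0 0).exists
  refine ⟨f 0 x₀ / M 0 x₀, fun n => ?_⟩
  filter_upwards [hpairs n 0] with x hx
  obtain ⟨y, hy1, hy2⟩ := (hx.and hx₀).exists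
  have h6 : f n x / M n x = f 0 x₀ / M 0 x₀ := by rw [← hy1, hy2]
  have hMx := (hMpos n x).ne'
  calc f n x = (f n x / M n x) * M n x := by field_simp
    _ = (f 0 x₀ / M 0 x₀) * M n x := by rw [h6]

theorem stmt7
    (m ε : ℕ → ℝ)
    (hm : ∀ n, 0 < m n)
    (hε : Summable fun n => Real.exp (-ε n))
    (Z : ℝ) (hZ : Z = ∑' n, Real.exp (-ε n))
    (M : ℕ → ℝ → ℝ)
    (hM : ∀ n p, M n p =
      Real.exp (-(p ^ 2 / (2 * m n) + ε n)) / (Real.sqrt (2 * Real.pi * m n) * Z))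
    (hMnorm : (∑' n, ∫ p, M n p) = 1)
    (α : ℕ → ℕ → ℝ → ℝ → ℝ)
    (hαmeas : ∀ n n', Measurable fun q : ℝ × ℝ => α n n' q.1 q.2)
    (α₁ α₂ : ℝ) (hα₁ : 0 < α₁) (hα₁₂ : α₁ ≤ α₂)
    (hsym : ∀ n n' p p', α n n' p p' = α n' n p' p)
    (hbd : ∀ n n' p p', α₁ ≤ α n n' p p' ∧ α n n' p p' ≤ α₂)
    (Q : (ℕ → ℝ → ℝ) → ℕ → ℝ → ℝ)
    (hQ : ∀ f n p, Q f n p =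
      ∑' n', ∫ p', α n n' p p' * (M n p * f n' p' - M n' p' * f n p))
    (memL2M : (ℕ → ℝ → ℝ) → Prop)
    (hmem : ∀ f, memL2M f ↔ (∀ n, Measurable (f n)) ∧
      (∀ n, Integrable fun p => f n p ^ 2 / M n p) ∧
      (Summable fun n => ∫ p, f n p ^ 2 / M n p))
    (nrm : (ℕ → ℝ → ℝ) → ℝ)
    (hnrm : ∀ f, nrm f = (∑' n, ∫ p, f n p ^ 2 / M n p) ^ ((1 : ℝ) / 2)) :
    ∀ f, memL2M f →
      ((∀ n, ∀ᵐ p ∂(volume : Measure ℝ), Q f n p = 0) ↔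
        ∃ N : ℝ, ∀ n, ∀ᵐ p ∂(volume : Measure ℝ), f n p = N * M n p) := by
  intro f hf
  rw [hmem] at hf
  obtain ⟨hfmeas, hfint, hfsum⟩ := hf
  -- basic facts about M
  have hZpos : 0 < Z := by
    rw [hZ]; exact Summable.tsum_pos hε (fun n => (Real.exp_pos _).le) 0 (Real.exp_pos _)
  have hMpos : ∀ n p, 0 < M n p := by
    intro n p; rw [hM]
    exact div_pos (Real.exp_pos _)
      (mul_pos (Real.sqrt_pos.2 (by have := hm n; positivity)) hZpos)
  have hMint : ∀ n, Integrable (M n) := by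
    intro n
    have h1 : Integrable (fun p : ℝ => Real.exp (-(1 / (2 * m n)) * p ^ 2)) :=
      integrable_exp_neg_mul_sq (by have := hm n; positivity)
    apply (h1.const_mul (Real.exp (-ε n) / (Real.sqrt (2 * Real.pi * m n) * Z))).congr
    filter_upwards with p
    rw [hM, show -(p ^ 2 / (2 * m n) + ε n) = (-(1 / (2 * m n)) * p ^ 2) + -ε n by
      field_simp; ring, Real.exp_add]
    ring
  have hMsum : Summable fun n => ∫ p, M n p := by
    by_contra hc
    rw [tsum_eq_zero_of_not_summable hc] at hMnorm
    norm_num at hMnorm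
  have hMabs : Summable fun n => ∫ p, |M n p| :=
    hMsum.congr fun n => by
      apply integral_congr_ae
      filter_upwards with p
      exact (abs_of_pos (hMpos n p)).symm
  have hgabs : Summable fun n => ∫ p, |f n p ^ 2 / M n p| :=
    hfsum.congr fun n => by
      apply integral_congr_ae
      filter_upwards with p
      exact (abs_of_nonneg (div_nonneg (sq_nonneg _) (hMpos n p).le)).symm
  -- integrability of f
  have key : ∀ n p, |f n p| ≤ (f n p ^ 2 / M n p + M n p) / 2 := by
    intro n p
    have hMp := hMpos n p
    have h1 : 2 * |f n p| - M n p ≤ f n p ^ 2 / M n p := by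
      rw [le_div_iff₀ hMp]
      nlinarith [sq_nonneg (|f n p| - M n p), sq_abs (f n p)]
    linarith
  have hfint' : ∀ n, Integrable (f n) := by
    intro n
    apply Integrable.mono' (((hfint n).add (hMint n)).div_const 2)
      (hfmeas n).aestronglyMeasurable
    filter_upwards with p
    exact key n p
  have hfabs : Summable fun n => ∫ p, |f n p| := by
    apply Summable.of_nonneg_of_le (fun n => integral_nonneg fun p => abs_nonneg _)
      (fun n => ?_) ((hfsum.add hMsum).div_const 2)
    calc ∫ p, |f n p| ≤ ∫ p, (f n p ^ 2 / M n p + M n p) / 2 :=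
        integral_mono (hfint' n).abs (((hfint n).add (hMint n)).div_const 2) (key n)
      _ = ((∫ p, f n p ^ 2 / M n p) + ∫ p, M n p) / 2 := by
          rw [integral_div, integral_add (hfint n) (hMint n)]
  constructor
  · -- forward direction
    intro hQ0
    exact aux_forward M hMpos hMint hMabs α hαmeas α₁ α₂ hα₁ hsym hbd f
      (fun k p => f k p ^ 2 / M k p) (fun n p => rfl) hfint' hfabs hfint hgabs
      (fun n => (hQ0 n).mono fun p hp => by rw [← hQ]; exact hp)
  · -- backward direction
    rintro ⟨N, hNae⟩ n
    filter_upwards [hNae n] with p hp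
    rw [hQ]
    have hz : ∀ n', ∫ p', α n n' p p' * (M n p * f n' p' - M n' p' * f n p) = 0 := by
      intro n'
      have he : (fun p' => α n n' p p' * (M n p * f n' p' - M n' p' * f n p))
          =ᵐ[volume] (fun _ => (0 : ℝ)) := by
        filter_upwards [hNae n'] with p' hp'
        rw [hp, hp']
        ring
      rw [integral_congr_ae he, integral_zero]
    simp only [hz, tsum_zero]
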